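/- Let (μₙ)ₙ≥1 and μ be probability measures on the positive integers. Assume that (μₙ) is tight and that for every N ≥ 1, μₙ({x : N ∣ x}) → μ({x : N ∣ x}) as n → ∞. Then (μₙ) converges in law to μ, i.e., μₙ({k}) → μ({k}) for every positive integer k. -/

import Mathlib

open MeasureTheory Filter Topology ENNReal

private lemma biUnion_tendsto_aux (μ : ℕ → Measure ℕ) (ν : Measure ℕ)
    (hμfin : ∀ n (s : Set ℕ), μ n s ≠ ⊤) (hνfin : ∀ s : Set ℕ, ν s ≠ ⊤)
    (hdiv : ∀ N : ℕ, 1 ≤ N →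
      Tendsto (fun n => μ n {x | N ∣ x}) atTop (𝓝 (ν {x | N ∣ x}))) :
    ∀ m : ℕ, ∀ S : Finset ℕ, S.card ≤ m → (∀ x ∈ S, 1 ≤ x) →
      Tendsto (fun n => μ n (⋃ x ∈ S, {y : ℕ | x ∣ y})) atTop
        (𝓝 (ν (⋃ x ∈ S, {y : ℕ | x ∣ y}))) := by
  intro m
  induction m with
  | zero =>
      intro S hS _
      have : S = ∅ := Finset.card_eq_zero.mp (Nat.le_zero.mp hS)
      subst this
      simp
  | succ m ih =>
      intro S hS hpos
      rcases S.eq_empty_or_nonempty with rfl | ⟨a, ha⟩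
      · simp
      · set S' := S.erase a with hS'def
        have hins : insert a S' = S := Finset.insert_erase ha
        have hcard : S'.card ≤ m := by
          have h1 : S'.card = S.card - 1 := by
            rw [hS'def]; exact Finset.card_erase_of_mem ha
          have h2 : 1 ≤ S.card := Finset.card_pos.mpr ⟨a, ha⟩
          omega
        have hpos' : ∀ x ∈ S', 1 ≤ x := fun x hx => hpos x (Finset.mem_of_mem_erase hx)
        set A : Set ℕ := {y | a ∣ y} with hAdef
        set U' : Set ℕ := ⋃ x ∈ S', {y : ℕ | x ∣ y} with hU'def
        set T : Finset ℕ := S'.image (Nat.lcm a) with hTdef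
        have hsetU : (⋃ x ∈ S, {y : ℕ | x ∣ y}) = A ∪ U' := by
          rw [← hins]
          simp [Set.biUnion_insert]
          rfl
        have hinter : A ∩ U' = ⋃ x ∈ T, {y : ℕ | x ∣ y} := by
          ext y
          simp only [hTdef, hAdef, hU'def, Set.mem_inter_iff, Set.mem_iUnion,
            Set.mem_setOf_eq, Finset.mem_image, exists_prop]
          constructor
          · rintro ⟨hay, x, hx, hxy⟩
            exact ⟨Nat.lcm a x, ⟨x, hx, rfl⟩, Nat.lcm_dvd_iff.mpr ⟨hay, hxy⟩⟩
          · rintro ⟨z, ⟨x, hx, rfl⟩, hzy⟩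
            obtain ⟨h1, h2⟩ := Nat.lcm_dvd_iff.mp hzy
            exact ⟨h1, x, hx, h2⟩
        have hTcard : T.card ≤ m := le_trans Finset.card_image_le hcard
        have hTpos : ∀ x ∈ T, 1 ≤ x := by
          intro x hx
          obtain ⟨z, hz, rfl⟩ := Finset.mem_image.mp hx
          have ha1 : a ≠ 0 := by have := hpos a ha; omega
          have hz1 : z ≠ 0 := by have := hpos' z hz; omega
          have := Nat.lcm_ne_zero ha1 hz1
          omega
        have hA : Tendsto (fun n => μ n A) atTop (𝓝 (ν A)) := hdiv a (hpos a ha)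
        have hU' : Tendsto (fun n => μ n U') atTop (𝓝 (ν U')) := ih S' hcard hpos'
        have hI : Tendsto (fun n => μ n (A ∩ U')) atTop (𝓝 (ν (A ∩ U'))) := by
          rw [hinter]; exact ih T hTcard hTpos
        have key : ∀ (ρ : Measure ℕ), ρ (A ∩ U') ≠ ⊤ →
            ρ (A ∪ U') = ρ A + ρ U' - ρ (A ∩ U') := by
          intro ρ hρ
          exact ENNReal.eq_sub_of_add_eq hρ
            (measure_union_add_inter (μ := ρ) A MeasurableSet.of_discrete)
        have heq : (fun n => μ n (⋃ x ∈ S, {y : ℕ | x ∣ y}))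
            = fun n => μ n A + μ n U' - μ n (A ∩ U') := by
          funext n; rw [hsetU]; exact key (μ n) (hμfin n _)
        rw [heq, hsetU, key ν (hνfin _)]
        exact ENNReal.Tendsto.sub (hA.add hU') hI (Or.inr (hνfin _))

theorem tendsto_of_tight_of_divisibility (μ : ℕ → Measure ℕ) (ν : Measure ℕ)
    (hμprob : ∀ n, IsProbabilityMeasure (μ n)) [IsProbabilityMeasure ν]
    (hμ0 : ∀ n, μ n {0} = 0) (hν0 : ν {0} = 0)
    (htight : ∀ ε : ℝ, 0 < ε → ∃ F : Finset ℕ, ∀ n, ENNReal.ofReal (1 - ε) ≤ μ n ↑F)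
    (hdiv : ∀ N : ℕ, 1 ≤ N →
      Tendsto (fun n => μ n {x | N ∣ x}) atTop (𝓝 (ν {x | N ∣ x}))) :
    ∀ k : ℕ, 1 ≤ k → Tendsto (fun n => μ n {k}) atTop (𝓝 (ν {k})) := by
  have hμfin : ∀ n (s : Set ℕ), μ n s ≠ ⊤ := fun n s => measure_ne_top _ _
  have hνfin : ∀ s : Set ℕ, ν s ≠ ⊤ := fun s => measure_ne_top _ _
  -- ν is tight
  have hνt : ∀ r : ℝ≥0∞, 0 < r → ∃ G : Finset ℕ, (1 : ℝ≥0∞) ≤ ν ↑G + r := by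
    intro r hr
    have hmono : Monotone (fun m : ℕ => (↑(Finset.range m) : Set ℕ)) := by
      intro i j hij
      exact Finset.coe_subset.mpr (Finset.range_subset_range.mpr hij)
    have hun : (⋃ m, (↑(Finset.range m) : Set ℕ)) = Set.univ := by
      ext x
      simp only [Set.mem_iUnion, Finset.coe_range, Set.mem_Iio, Set.mem_univ, iff_true]
      exact ⟨x + 1, x.lt_succ_self⟩
    have ht := tendsto_measure_iUnion_atTop (μ := ν) hmono
    rw [hun, measure_univ] at ht
    obtain ⟨m, hm⟩ := ((ENNReal.tendsto_nhds one_ne_top).mp ht r hr).exists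
    exact ⟨Finset.range m, tsub_le_iff_right.mp hm.1⟩
  intro k hk
  rw [ENNReal.tendsto_nhds (hνfin {k})]
  intro ε hε
  set δ : ℝ≥0∞ := min ε 1 / 3 with hδdef
  have hmin0 : min ε 1 ≠ 0 := (lt_min hε zero_lt_one).ne'
  have hδpos : 0 < δ := ENNReal.div_pos hmin0 (by norm_num)
  have hδ1 : δ ≤ 1 := by
    apply ENNReal.div_le_of_le_mul
    calc min ε 1 ≤ 1 := min_le_right _ _
    _ ≤ 1 * 3 := by norm_num
  have hδtop : δ ≠ ⊤ := ne_top_of_le_ne_top one_ne_top hδ1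
  have h3δ : δ + δ + δ ≤ ε := by
    have : δ + δ + δ = 3 * δ := by ring
    rw [this, hδdef, ENNReal.mul_div_cancel' (by norm_num) (by norm_num)]
    exact min_le_left _ _
  set r : ℝ := δ.toReal with hrdef
  have hr : 0 < r := ENNReal.toReal_pos hδpos.ne' hδtop
  have hofr : ENNReal.ofReal r = δ := ENNReal.ofReal_toReal hδtop
  have hr1 : r ≤ 1 := by
    have := ENNReal.toReal_mono one_ne_top hδ1
    simpa using this
  obtain ⟨F, hF⟩ := htight r hr
  obtain ⟨G, hG⟩ := hνt δ hδpos
  set F' : Finset ℕ := F ∪ G with hF'def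
  have hone : ENNReal.ofReal (1 - r) + δ = 1 := by
    rw [← hofr, ← ENNReal.ofReal_add (by linarith) hr.le]
    norm_num
  have hμF'c : ∀ n, μ n (↑F' : Set ℕ)ᶜ ≤ δ := by
    intro n
    haveI := hμprob n
    rw [prob_compl_eq_one_sub MeasurableSet.of_discrete]
    rw [tsub_le_iff_right]
    calc (1 : ℝ≥0∞) = ENNReal.ofReal (1 - r) + δ := hone.symm
      _ ≤ μ n ↑F + δ := by gcongr; exact hF n
      _ ≤ δ + μ n ↑F' := by
          rw [add_comm]; gcongr
          exact Finset.subset_union_left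
  have hνF'c : ν (↑F' : Set ℕ)ᶜ ≤ δ := by
    rw [prob_compl_eq_one_sub MeasurableSet.of_discrete, tsub_le_iff_right]
    calc (1 : ℝ≥0∞) ≤ ν ↑G + δ := hG
      _ ≤ δ + ν ↑F' := by
          rw [add_comm]; gcongr
          exact Finset.subset_union_right
  set S : Finset ℕ := F'.filter (fun x => k ∣ x ∧ x ≠ k ∧ x ≠ 0) with hSdef
  set U : Set ℕ := ⋃ x ∈ S, {y : ℕ | x ∣ y} with hUdef
  have hSpos : ∀ x ∈ S, 1 ≤ x := by
    intro x hx
    rw [hSdef, Finset.mem_filter] at hx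
    omega
  have hUlim : Tendsto (fun n => μ n U) atTop (𝓝 (ν U)) :=
    biUnion_tendsto_aux μ ν hμfin hνfin hdiv S.card S le_rfl hSpos
  have hBk := hdiv k hk
  have hkU : k ∉ U := by
    rw [hUdef]
    simp only [Set.mem_iUnion, Set.mem_setOf_eq, not_exists]
    intro x hx hxk
    rw [hSdef, Finset.mem_filter] at hx
    exact hx.2.2.1 (Nat.dvd_antisymm hxk hx.2.1)
  have hdisj : Disjoint ({k} : Set ℕ) U := Set.disjoint_singleton_left.mpr hkU
  have hsub1 : ({k} : Set ℕ) ∪ U ⊆ {y | k ∣ y} := by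
    rintro y (rfl | hy)
    · exact dvd_refl _
    · rw [hUdef] at hy
      simp only [Set.mem_iUnion, Set.mem_setOf_eq] at hy
      obtain ⟨x, hx, hxy⟩ := hy
      rw [hSdef, Finset.mem_filter] at hx
      exact dvd_trans hx.2.1 hxy
  have hsub2 : {y : ℕ | k ∣ y} ⊆ (({k} : Set ℕ) ∪ U) ∪ (({0} : Set ℕ) ∪ (↑F' : Set ℕ)ᶜ) := by
    intro y hy
    by_cases hy0 : y = 0
    · exact Or.inr (Or.inl hy0)
    by_cases hyk : y = k
    · exact Or.inl (Or.inl hyk)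
    by_cases hyF : y ∈ F'
    · refine Or.inl (Or.inr ?_)
      rw [hUdef]
      simp only [Set.mem_iUnion, Set.mem_setOf_eq]
      exact ⟨y, by rw [hSdef, Finset.mem_filter]; exact ⟨hyF, hy, hyk, hy0⟩, dvd_refl y⟩
    · exact Or.inr (Or.inr hyF)
  -- per measure bounds
  have hlow : ∀ (ρ : Measure ℕ), ρ {k} + ρ U ≤ ρ {y | k ∣ y} := by
    intro ρ
    rw [← measure_union hdisj MeasurableSet.of_discrete]
    exact measure_mono hsub1
  have hhigh : ∀ (ρ : Measure ℕ), ρ {0} = 0 → ρ (↑F' : Set ℕ)ᶜ ≤ δ →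
      ρ {y | k ∣ y} ≤ ρ {k} + ρ U + δ := by
    intro ρ h0 hc
    calc ρ {y | k ∣ y} ≤ ρ ((({k} : Set ℕ) ∪ U) ∪ (({0} : Set ℕ) ∪ (↑F' : Set ℕ)ᶜ)) :=
          measure_mono hsub2
      _ ≤ ρ (({k} : Set ℕ) ∪ U) + ρ (({0} : Set ℕ) ∪ (↑F' : Set ℕ)ᶜ) := measure_union_le _ _
      _ ≤ (ρ {k} + ρ U) + (ρ {0} + ρ (↑F' : Set ℕ)ᶜ) := by
          gcongr <;> exact measure_union_le _ _
      _ = (ρ {k} + ρ U) + ρ (↑F' : Set ℕ)ᶜ := by rw [h0, zero_add]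
      _ ≤ ρ {k} + ρ U + δ := by gcongr
  have e1 := (ENNReal.tendsto_nhds (hνfin {x | k ∣ x})).mp hBk δ hδpos
  have e2 := (ENNReal.tendsto_nhds (hνfin U)).mp hUlim δ hδpos
  filter_upwards [e1, e2] with n h1 h2
  have h1a : μ n {x | k ∣ x} ≤ ν {x | k ∣ x} + δ := h1.2
  have h1b : ν {x | k ∣ x} ≤ μ n {x | k ∣ x} + δ := tsub_le_iff_right.mp h1.1
  have h2a : μ n U ≤ ν U + δ := h2.2
  have h2b : ν U ≤ μ n U + δ := tsub_le_iff_right.mp h2.1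
  constructor
  · -- ν {k} - ε ≤ μ n {k}
    rw [tsub_le_iff_right]
    have hchain : ν {k} + ν U ≤ (μ n {k} + (δ + δ + δ)) + ν U := by
      calc ν {k} + ν U ≤ ν {y | k ∣ y} := hlow ν
        _ ≤ μ n {y | k ∣ y} + δ := h1b
        _ ≤ (μ n {k} + μ n U + δ) + δ := by gcongr; exact hhigh (μ n) (hμ0 n) (hμF'c n)
        _ ≤ (μ n {k} + (ν U + δ) + δ) + δ := by gcongr
        _ = (μ n {k} + (δ + δ + δ)) + ν U := by ring
    have := (ENNReal.add_le_add_iff_right (hνfin U)).mp hchain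
    calc ν {k} ≤ μ n {k} + (δ + δ + δ) := this
      _ ≤ μ n {k} + ε := by gcongr
  · -- μ n {k} ≤ ν {k} + ε
    have hchain : μ n {k} + μ n U ≤ (ν {k} + (δ + δ + δ)) + μ n U := by
      calc μ n {k} + μ n U ≤ μ n {y | k ∣ y} := hlow (μ n)
        _ ≤ ν {y | k ∣ y} + δ := h1a
        _ ≤ (ν {k} + ν U + δ) + δ := by gcongr; exact hhigh ν hν0 hνF'c
        _ ≤ (ν {k} + (μ n U + δ) + δ) + δ := by gcongr
        _ = (ν {k} + (δ + δ + δ)) + μ n U := by ring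
    have := (ENNReal.add_le_add_iff_right (hμfin n U)).mp hchain
    calc μ n {k} ≤ ν {k} + (δ + δ + δ) := this
      _ ≤ ν {k} + ε := by gcongr
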